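/- With the same setup (r = q^a, a ≤ 0), the quantum Serre combination also equals the reversed product form: Σ_{n=0}^{1-a} (-1)^n binom_q(1-a, n) w_{1-a-n,n}(x,y) = Σ_{n=0}^{1-a} (-1)^n binom_q(1-a, n) v_{1-a-n}(x) w_n(y). -/

import Mathlib

open Polynomial Finset

noncomputable section

/-- The indeterminate `q` in `ℚ(q)`. -/
def q : RatFunc ℚ := RatFunc.X

/-- The balanced quantum integer `[m]_q = (q^m - q^{-m})/(q - q^{-1})`. -/
def qnum (m : ℕ) : RatFunc ℚ := (q ^ (m : ℤ) - q ^ (-(m : ℤ))) / (q - q⁻¹)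

/-- The balanced quantum factorial `[m]_q!`. -/
def qfact : ℕ → RatFunc ℚ
  | 0 => 1
  | n + 1 => qfact n * qnum (n + 1)

/-- The balanced Gaussian binomial coefficient. -/
def qbinom (n k : ℕ) : RatFunc ℚ := qfact n / (qfact k * qfact (n - k))

lemma q_ne_zero : q ≠ 0 := RatFunc.X_ne_zero

lemma q_pow_ne_one {n : ℕ} (hn : 1 ≤ n) : q ^ n ≠ 1 := by
  intro h
  have : (RatFunc.X : RatFunc ℚ) ^ n = 1 := h
  have h2 : (algebraMap (Polynomial ℚ) (RatFunc ℚ)) (Polynomial.X ^ n) = algebraMap _ _ 1 := by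
    simpa [map_pow, RatFunc.algebraMap_X] using this
  have := IsFractionRing.injective (Polynomial ℚ) (RatFunc ℚ) h2
  have hdeg := congrArg Polynomial.natDegree this
  simp [Polynomial.natDegree_X_pow] at hdeg
  omega

lemma qsub_ne_zero : q - q⁻¹ ≠ 0 := by
  intro h
  have h1 : q * q = 1 := by
    have := sub_eq_zero.mp h
    field_simp [q_ne_zero] at this
    linear_combination this
  exact q_pow_ne_one (n := 2) (by norm_num) (by rw [sq]; exact h1)

lemma qnum_ne_zero {m : ℕ} (hm : 1 ≤ m) : qnum m ≠ 0 := by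
  unfold qnum
  rw [div_ne_zero_iff]
  refine ⟨?_, qsub_ne_zero⟩
  intro h
  have heq := sub_eq_zero.mp h
  have h2 : q ^ ((m:ℤ) + (m:ℤ)) = 1 := by
    rw [zpow_add₀ q_ne_zero]
    nth_rewrite 2 [heq]
    rw [← zpow_add₀ q_ne_zero, add_neg_cancel, zpow_zero]
  have h3 : q ^ (2*m) = 1 := by
    have : ((2*m : ℕ) : ℤ) = (m:ℤ) + (m:ℤ) := by push_cast; ring
    rw [← zpow_natCast q (2*m), this]; exact h2
  exact q_pow_ne_one (by omega) h3

lemma qfact_ne_zero (n : ℕ) : qfact n ≠ 0 := by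
  induction n with
  | zero => simp [qfact]
  | succ n ih => exact mul_ne_zero ih (qnum_ne_zero (by omega))


lemma zpow_neg_natCast (n : ℕ) : q ^ (-(n:ℤ)) = (q ^ n)⁻¹ := by
  rw [zpow_neg, zpow_natCast]

lemma qnum_eq (n : ℕ) : qnum n = (q ^ n - (q ^ n)⁻¹) / (q - q⁻¹) := by
  rw [qnum, zpow_neg_natCast, zpow_natCast]

lemma qnum_mul (n : ℕ) : qnum n * (q - q⁻¹) = q ^ n - (q ^ n)⁻¹ := by
  rw [qnum_eq, div_mul_cancel₀ _ qsub_ne_zero]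

lemma qnum_shift (i j : ℕ) : q ^ j * qnum (i + j) = q ^ (i + j) * qnum j + qnum i := by
  have h1 : q ^ (i+j) ≠ 0 := pow_ne_zero _ q_ne_zero
  have h2 : q ^ i ≠ 0 := pow_ne_zero _ q_ne_zero
  have h3 : q ^ j ≠ 0 := pow_ne_zero _ q_ne_zero
  apply mul_right_cancel₀ qsub_ne_zero
  rw [mul_assoc, qnum_mul, add_mul, mul_assoc, qnum_mul, qnum_mul]
  field_simp
  ring

lemma one_sub_q_sq (s : ℕ) : 1 - q ^ (2*s) = -(q ^ s * ((q - q⁻¹) * qnum s)) := by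
  rw [mul_comm (q - q⁻¹), qnum_mul]
  have h2 : q ^ s ≠ 0 := pow_ne_zero _ q_ne_zero
  field_simp
  ring

lemma one_sub_shift (s k : ℕ) :
    (1 - q ^ (2*s)) * q ^ k * qnum (s+k) = (1 - q ^ (2*(s+k))) * qnum s := by
  rw [one_sub_q_sq, one_sub_q_sq]
  ring

def alpha : ℕ → ℕ → RatFunc ℚ
  | _, 0 => 1
  | 0, _+1 => 0
  | m+1, k+1 => alpha m (k+1) + q^(2*m) * alpha m k

@[simp] lemma alpha_zero (m : ℕ) : alpha m 0 = 1 := by cases m <;> rfl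

lemma alpha_succ (m k : ℕ) : alpha (m+1) (k+1) = alpha m (k+1) + q^(2*m) * alpha m k := rfl

lemma alpha_vanish : ∀ m k, m < k → alpha m k = 0 := by
  intro m
  induction m with
  | zero => intro k hk; match k, hk with | k+1, _ => rfl
  | succ m ih =>
    intro k hk
    match k, hk with
    | k+1, hk =>
      rw [alpha_succ, ih (k+1) (by omega), ih k (by omega)]
      ring

lemma alpha_closed : ∀ m k, k ≤ m →
    alpha m k * (qfact k * qfact (m-k)) * q ^ k = q ^ (k*m) * qfact m := by
  intro m
  induction m with
  | zero => intro k hk; interval_cases k; simp [alpha, qfact]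
  | succ m ih =>
    intro k hk
    match k with
    | 0 => simp [qfact]
    | k+1 =>
      rw [alpha_succ]
      rcases Nat.lt_or_ge k m with hkm | hkm
      · -- k+1 ≤ m
        obtain ⟨d, hd⟩ : ∃ d, m = k+1+d := ⟨m - (k+1), by omega⟩
        subst hd
        have E1 := ih (k+1) (by omega)
        have E2 := ih k (by omega)
        have E3 := qnum_shift (d+1) (k+1)
        rw [show k+1+d - (k+1) = d from by omega] at E1
        rw [show k+1+d - k = d+1 from by omega] at E2
        rw [show k+1+d+1 - (k+1) = d+1 from by omega]
        rw [show d+1+(k+1) = k+1+d+1 from by omega] at E3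
        rw [show qfact (k+1) = qfact k * qnum (k+1) from rfl,
            show qfact (d+1) = qfact d * qnum (d+1) from rfl,
            show qfact (k+1+d+1) = qfact (k+1+d) * qnum (k+1+d+1) from rfl] at *
        linear_combination qnum (d+1) * E1 + q^(2*(k+1+d)+1) * qnum (k+1) * E2
          - q^((k+1)*(k+1+d)) * qfact (k+1+d) * E3
      · -- k = m
        have hk1 : k = m := by omega
        subst hk1
        rw [alpha_vanish k (k+1) (by omega)]
        have E2 := ih k (le_refl k)
        rw [Nat.sub_self] at E2
        rw [show k+1 - (k+1) = 0 from by omega]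
        rw [show qfact (k+1) = qfact k * qnum (k+1) from rfl]
        linear_combination q^(2*k+1) * qnum (k+1) * E2

lemma alpha_constraint (m k : ℕ) :
    (1 - q ^ (2*(m+1-k))) * alpha (m+1) k = (1 - q ^ (2*(m+1))) * alpha m k := by
  rcases Nat.lt_or_ge m k with hk | hk
  · rcases Nat.lt_or_ge (m+1) k with hk1 | hk1
    · rw [alpha_vanish _ _ hk1, alpha_vanish _ _ hk]; ring
    · have : k = m+1 := by omega
      subst this
      rw [alpha_vanish m (m+1) (by omega), Nat.sub_self]
      norm_num
  · obtain ⟨d, hd⟩ : ∃ d, m = k + d := ⟨m - k, by omega⟩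
    subst hd
    have E1 := alpha_closed (k+d+1) k (by omega)
    have E2 := alpha_closed (k+d) k (by omega)
    have E3 := one_sub_shift (d+1) k
    rw [show k+d+1-k = d+1 from by omega] at E1 ⊢
    rw [show k+d-k = d from by omega] at E2
    rw [show d+1+k = k+d+1 from by omega] at E3
    rw [show qfact (d+1) = qfact d * qnum (d+1) from rfl,
        show qfact (k+d+1) = qfact (k+d) * qnum (k+d+1) from rfl] at E1
    have hF : (qfact k * (qfact d * qnum (d+1))) * q ^ k ≠ 0 := by
      apply mul_ne_zero
      apply mul_ne_zero (qfact_ne_zero _)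
      exact mul_ne_zero (qfact_ne_zero _) (qnum_ne_zero (by omega))
      exact pow_ne_zero _ q_ne_zero
    apply mul_right_cancel₀ hF
    rw [show k+d+1 = (k+d)+1 from rfl]
    linear_combination (1-q^(2*(d+1))) * E1 - (1-q^(2*(k+d+1))) * qnum (d+1) * E2
      + q^(k*(k+d)) * qfact (k+d) * E3
def cfv (a : ℤ) (m n k : ℕ) : RatFunc ℚ :=
  (-(q^a))^k * alpha m k * ∏ t ∈ range k, (1 - q^(2*(n-t)))

lemma qfact_ratio (j : ℕ) : ∀ k : ℕ, qfact j * ∏ t ∈ range k, qnum (j+k-t) = qfact (j+k)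
  | 0 => by simp
  | k+1 => by
    rw [Finset.prod_range_succ']
    have h1 : ∀ t ∈ range k, qnum (j+(k+1)-(t+1)) = qnum (j+k-t) := by
      intro t ht
      congr 1
      omega
    rw [Finset.prod_congr rfl h1, show j+(k+1)-0 = (j+k)+1 from by omega,
      show qfact (j+(k+1)) = qfact (j+k) * qnum ((j+k)+1) from rfl,
      ← mul_assoc, qfact_ratio j k]

lemma sum_exp (j : ℕ) : ∀ k : ℕ, ∑ t ∈ range k, (j+k-t) = j*k + k*(k+1)/2
  | 0 => by simp
  | k+1 => by
    rw [Finset.sum_range_succ']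
    have h1 : ∀ t ∈ range k, (j+(k+1)-(t+1)) = (j+k-t) := by intro t ht; omega
    rw [Finset.sum_congr rfl h1, sum_exp j k]
    have h2 : k*(k+1)/2*2 = k*(k+1) := Nat.div_mul_cancel ((Nat.even_mul_succ_self k).two_dvd)
    have h3 : (k+1)*(k+2)/2*2 = (k+1)*(k+2) := Nat.div_mul_cancel (((Nat.even_mul_succ_self (k+1)).two_dvd).trans (dvd_of_eq (by ring)))
    have h4 : k*(k+1) + 2*(k+1) = (k+1)*(k+2) := by ring
    have h5 : j*(k+1) = j*k + j := by ring
    have h6 : (k+1)*(k+2) = (k+1)*(k+1+1) := by ring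
    omega

lemma prod_one_sub (j k : ℕ) :
    (∏ t ∈ range k, (1 - q^(2*(j+k-t)))) * qfact j
    = (-1:RatFunc ℚ)^k * q^(j*k + k*(k+1)/2) * (q-q⁻¹)^k * qfact (j+k) := by
  have h1 : ∀ t ∈ range k, (1 - q^(2*(j+k-t)))
      = -1 * (q^(j+k-t) * ((q - q⁻¹) * qnum (j+k-t))) := by
    intro t ht
    rw [one_sub_q_sq]
    ring
  rw [Finset.prod_congr rfl h1]
  rw [Finset.prod_mul_distrib, Finset.prod_mul_distrib, Finset.prod_mul_distrib]
  rw [Finset.prod_const, Finset.prod_const, Finset.prod_pow_eq_pow_sum, Finset.card_range,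
    sum_exp j k]
  linear_combination ((-1:RatFunc ℚ)^k * q^(j*k + k*(k+1)/2) * (q-q⁻¹)^k) * qfact_ratio j k

set_option maxHeartbeats 2000000 in
lemma coeffID (a : ℤ) (j k e : ℕ) (ha : a = 1 - ((j+2*k+e : ℕ) : ℤ)) :
    (-1:RatFunc ℚ)^(j+k) * qbinom (j+2*k+e) (j+k) * cfv a (k+e) (j+k) k
    = (-1:RatFunc ℚ)^j * qbinom (j+2*k+e) j *
      ((-1:RatFunc ℚ)^k * q^k * ((q-q⁻¹)^k * q^(-((k*(k+1)/2 : ℕ):ℤ))) *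
        (qfact (2*k+e) / (qfact e * qfact k))) := by
  have hN : (j+2*k+e) = j + (k + (k+e)) := by omega
  have hqa : q ^ a = q * ((q^(j+2*k+e) : RatFunc ℚ))⁻¹ := by
    rw [ha, zpow_sub₀ q_ne_zero, zpow_one, zpow_natCast, div_eq_mul_inv]
  have hqT : q ^ (-((k*(k+1)/2 : ℕ):ℤ)) = ((q^(k*(k+1)/2) : RatFunc ℚ))⁻¹ := by
    rw [zpow_neg, zpow_natCast]
  have hprod := prod_one_sub j k
  have halpha := alpha_closed (k+e) k (by omega)
  rw [show k+e-k = e from by omega] at halpha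
  have hT : k*(k+1)/2 + k*(k+1)/2 = k*k + k := by
    have h2 : k*(k+1)/2*2 = k*(k+1) := Nat.div_mul_cancel ((Nat.even_mul_succ_self k).two_dvd)
    have h3 : k*(k+1) = k*k + k := by ring
    omega
  have hqTT : (q:RatFunc ℚ)^(k*(k+1)/2) * q^(k*(k+1)/2) = q^(k*k+k) := by
    rw [← pow_add, hT]
  have hs2 : ((-1:RatFunc ℚ))^k * (-1)^k = 1 := by
    rw [← pow_add, ← two_mul, pow_mul]
    norm_num
  rw [qbinom, qbinom, show (j+2*k+e) - (j+k) = k+e from by omega,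
    show (j+2*k+e) - j = 2*k+e from by omega, cfv, hqa, hqT]
  have hqn : ∀ n : ℕ, (q:RatFunc ℚ)^n ≠ 0 := fun n => pow_ne_zero _ q_ne_zero
  have halpha' : alpha (k+e) k = q^(k*(k+e)) * qfact (k+e) / (qfact k * qfact e * q^k) := by
    rw [eq_div_iff (by exact mul_ne_zero (mul_ne_zero (qfact_ne_zero _) (qfact_ne_zero _)) (hqn k))]
    linear_combination halpha
  have hprod' : (∏ t ∈ range k, (1 - q^(2*(j+k-t))))
      = (-1:RatFunc ℚ)^k * q^(j*k + k*(k+1)/2) * (q-q⁻¹)^k * qfact (j+k) / qfact j := by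
    rw [eq_div_iff (qfact_ne_zero _)]
    linear_combination hprod
  rw [halpha', hprod', pow_add, neg_pow (q * (q ^ (j+2*k+e))⁻¹)]
  rcases Nat.even_or_odd k with hk | hk
  · rw [hk.neg_one_pow]
    have hq0 := q_ne_zero
    field_simp [qfact_ne_zero]
    have hu : ∀ n : ℕ, (q:RatFunc ℚ) ^ n * q⁻¹ ^ n = 1 := fun n => by
      rw [← mul_pow, mul_inv_cancel₀ q_ne_zero, one_pow]
    have hf : ∀ n : ℕ, qfact n * (qfact n)⁻¹ = 1 := fun n => mul_inv_cancel₀ (qfact_ne_zero n)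
    have hTu : (q⁻¹:RatFunc ℚ)^(k*k+k) = q⁻¹^(k*(k+1)/2) * q⁻¹^(k*(k+1)/2) := by
      rw [← pow_add, hT]
    have hkey : (q / q ^ (j + 2 * k + e)) ^ k * q ^ (k * (k + e)) * q ^ (j * k + k * (k + 1) / 2) *
        q ^ (k * (k + 1) / 2) = (q ^ k) ^ 2 := by
      rw [mul_assoc _ (q ^ (j * k + k * (k + 1) / 2)), ← pow_add, add_assoc (j * k), hT, div_pow]
      field_simp
      ring
    linear_combination ((q ^ 2 - 1) / q) ^ k * hkey
  · rw [hk.neg_one_pow]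
    have hq0 := q_ne_zero
    field_simp [qfact_ne_zero]
    have hu : ∀ n : ℕ, (q:RatFunc ℚ) ^ n * q⁻¹ ^ n = 1 := fun n => by
      rw [← mul_pow, mul_inv_cancel₀ q_ne_zero, one_pow]
    have hf : ∀ n : ℕ, qfact n * (qfact n)⁻¹ = 1 := fun n => mul_inv_cancel₀ (qfact_ne_zero n)
    have hTu : (q⁻¹:RatFunc ℚ)^(k*k+k) = q⁻¹^(k*(k+1)/2) * q⁻¹^(k*(k+1)/2) := by
      rw [← pow_add, hT]
    have hkey : (q / q ^ (j + 2 * k + e)) ^ k * q ^ (k * (k + e)) * q ^ (j * k + k * (k + 1) / 2) *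
        q ^ (k * (k + 1) / 2) = (q ^ k) ^ 2 := by
      rw [mul_assoc _ (q ^ (j * k + k * (k + 1) / 2)), ← pow_add, add_assoc (j * k), hT, div_pow]
      field_simp
      ring
    linear_combination -((q ^ 2 - 1) / q) ^ k * hkey


section Main
variable {M : Type*} [CommRing M] [Algebra (RatFunc ℚ) M] (B : M)

lemma C_smul (r : RatFunc ℚ) (b : M) :
    (MvPolynomial.C (r • b) : MvPolynomial (Fin 2) M) = r • MvPolynomial.C b := by
  rw [Algebra.smul_def, Algebra.smul_def, map_mul]
  congr 1

theorem Wclosed {B : M}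
    (a : ℤ) (N : ℕ)
    (w : ℕ → Polynomial M)
    (hw0 : w 0 = 1) (hw1 : w 1 = X)
    (hwrec : ∀ m : ℕ, 1 ≤ m →
      X * w m = w (m + 1) + C ((1 - q ^ (2 * m)) • B) * w (m - 1))
    (W : ℕ → ℕ → MvPolynomial (Fin 2) M)
    (hW0 : ∀ n, W 0 n = Polynomial.aeval (MvPolynomial.X 1 : MvPolynomial (Fin 2) M) (w n))
    (hWrec : ∀ m n : ℕ,
      MvPolynomial.X 0 * W m n =
        W (m + 1) n
        + (if m = 0 then 0 else MvPolynomial.C ((1 - q ^ (2 * m)) • B) * W (m - 1) n)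
        + (if n = 0 then 0 else
            MvPolynomial.C ((q ^ (2 * m) * (1 - q ^ (2 * n)) * q ^ a) • B) * W m (n - 1))) :
    ∀ m n : ℕ, W m n = ∑ k ∈ range (m+1),
      (cfv a m n k) •
        (MvPolynomial.C (B^k) * Polynomial.aeval (MvPolynomial.X 0 : MvPolynomial (Fin 2) M) (w (m-k))
          * Polynomial.aeval (MvPolynomial.X 1 : MvPolynomial (Fin 2) M) (w (n-k))) := by
  have hwrec' : ∀ j : ℕ, X * w j = w (j+1) + C ((1 - q^(2*j)) • B) * w (j-1) := by
    intro j
    match j with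
    | 0 => simp [hw0, hw1]
    | j+1 => exact hwrec (j+1) (by omega)
  set Φ := (Polynomial.aeval (MvPolynomial.X 0 : MvPolynomial (Fin 2) M) :
      Polynomial M →ₐ[M] MvPolynomial (Fin 2) M) with hΦ
  set Ψ := (Polynomial.aeval (MvPolynomial.X 1 : MvPolynomial (Fin 2) M) :
      Polynomial M →ₐ[M] MvPolynomial (Fin 2) M) with hΨ
  have hcf : ∀ m n k, cfv a m n k
      = (-(q^a))^k * alpha m k * ∏ t ∈ range k, (1 - q^(2*(n-t))) := fun _ _ _ => rfl
  intro m
  induction m using Nat.strong_induction_on with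
  | _ m ih =>
    match m with
    | 0 =>
      intro n
      rw [hW0 n]
      simp [cfv, hw0]
    | m+1 =>
      intro n
      have hsm : ∀ (r : RatFunc ℚ) (x : MvPolynomial (Fin 2) M),
          r • x = MvPolynomial.C (algebraMap (RatFunc ℚ) M r) * x := by
        intro r x
        rw [Algebra.smul_def]
        rfl
      have hsmM : ∀ (r : RatFunc ℚ) (b : M), r • b = algebraMap (RatFunc ℚ) M r * b :=
        fun r b => Algebra.smul_def r b
      have h0 : W (m+1) n = MvPolynomial.X 0 * W m n
          - (if m = 0 then 0 else MvPolynomial.C ((1 - q ^ (2 * m)) • B) * W (m - 1) n)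
          - (if n = 0 then 0 else
            MvPolynomial.C ((q ^ (2 * m) * (1 - q ^ (2 * n)) * q ^ a) • B) * W m (n - 1)) := by
        linear_combination (hWrec m n).symm
      -- step 1 : multiply the closed form of `W m n` by X 0
      have h1 : MvPolynomial.X 0 * W m n
          = (∑ k ∈ range (m+1), cfv a m n k •
              (MvPolynomial.C (B^k) * Φ (w (m+1-k)) * Ψ (w (n-k))))
          + (∑ k ∈ range (m+1), (cfv a m n k * (1 - q^(2*(m-k)))) •
              (MvPolynomial.C (B^(k+1)) * Φ (w (m-k-1)) * Ψ (w (n-k)))) := by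
        rw [ih m (by omega) n, Finset.mul_sum, ← Finset.sum_add_distrib]
        apply Finset.sum_congr rfl
        intro k hk
        have hk' : k ≤ m := by simp at hk; omega
        have hx : (MvPolynomial.X 0 : MvPolynomial (Fin 2) M) * Φ (w (m-k))
            = Φ (w (m+1-k)) + MvPolynomial.C ((1-q^(2*(m-k))) • B) * Φ (w (m-k-1)) := by
          have hj := congrArg Φ (hwrec' (m-k))
          rw [show m-k+1 = m+1-k from by omega] at hj
          have haX : Φ (X : Polynomial M) = MvPolynomial.X 0 := by
            rw [hΦ]; exact Polynomial.aeval_X _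
          have haC : ∀ b : M, Φ (C b) = MvPolynomial.C b := by
            intro b; rw [hΦ]; simp
          simpa [map_mul, map_add, haX, haC] using hj
        simp only [hsm, hsmM, map_mul, map_pow, map_neg] at hx ⊢
        linear_combination (MvPolynomial.C (algebraMap (RatFunc ℚ) M (cfv a m n k)) *
          MvPolynomial.C B ^ k * Ψ (w (n-k))) * hx
      -- step 2 : the "bad" sum equals the first correction term
      have h2 : (∑ k ∈ range (m+1), (cfv a m n k * (1 - q^(2*(m-k)))) •
              (MvPolynomial.C (B^(k+1)) * Φ (w (m-k-1)) * Ψ (w (n-k))))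
          = (if m = 0 then 0 else
              MvPolynomial.C ((1 - q ^ (2 * m)) • B) * W (m - 1) n) := by
        match m with
        | 0 =>
          simp
        | m'+1 =>
          rw [if_neg (by omega)]
          rw [show m'+1-1 = m' from by omega, ih m' (by omega) n]
          rw [Finset.sum_range_succ]
          have hlast : (cfv a (m'+1) n (m'+1) * (1 - q^(2*(m'+1-(m'+1))))) = 0 := by
            rw [Nat.sub_self]
            norm_num
          rw [hlast]
          rw [zero_smul, add_zero, Finset.mul_sum]
          apply Finset.sum_congr rfl
          intro k hk
          have hk' : k ≤ m' := by simp at hk; omega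
          have Ek : cfv a (m'+1) n k * (1-q^(2*(m'+1-k))) = (1-q^(2*(m'+1))) * cfv a m' n k := by
            simp only [hcf]
            linear_combination ((-(q^a))^k * ∏ t ∈ range k, (1-q^(2*(n-t)))) *
              alpha_constraint m' k
          have EkM := congrArg (fun r => (MvPolynomial.C (algebraMap (RatFunc ℚ) M r) :
            MvPolynomial (Fin 2) M)) Ek
          simp only [map_mul, map_pow, map_neg] at EkM
          rw [show m'+1-k-1 = m'-k from by omega]
          simp only [hsm, hsmM, map_mul, map_pow, map_neg]
          linear_combination (MvPolynomial.C B ^ (k+1) * Φ (w (m'-k)) * Ψ (w (n-k))) * EkM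
      -- step 3 : decomposition of the new coefficients
      have hP : ∀ (n' k' : ℕ), ∏ t ∈ range (k'+1), (1 - q^(2*(n'-t)))
          = (1-q^(2*n')) * ∏ t ∈ range k', (1 - q^(2*(n'-1-t))) := by
        intro n' k'
        rw [Finset.prod_range_succ']
        rw [Nat.sub_zero, mul_comm]
        congr 1
        apply Finset.prod_congr rfl
        intro t _
        congr 2
        omega
      have hsplit : ∀ k, cfv a (m+1) n k = cfv a m n k +
          (if k = 0 then 0 else q^(2*m) * (-(q^a)) * (1-q^(2*n)) * cfv a m (n-1) (k-1)) := by
        intro k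
        match k with
        | 0 => simp [hcf]
        | k+1 =>
          rw [if_neg (by omega), show k+1-1 = k from rfl]
          simp only [hcf]
          rw [alpha_succ, hP n k]
          ring
      -- step 4 : the goal sum splits as good sum plus (minus) second correction
      rw [h0, h1, h2]
      have h4 : ∑ k ∈ range (m+1+1), cfv a (m+1) n k •
            (MvPolynomial.C (B^k) * Φ (w (m+1-k)) * Ψ (w (n-k)))
          = (∑ k ∈ range (m+1), cfv a m n k •
              (MvPolynomial.C (B^k) * Φ (w (m+1-k)) * Ψ (w (n-k))))
          + (∑ k ∈ range (m+1), (q^(2*m) * (-(q^a)) * (1-q^(2*n)) * cfv a m (n-1) k) •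
              (MvPolynomial.C (B^(k+1)) * Φ (w (m-k)) * Ψ (w (n-1-k)))) := by
        have : ∀ k ∈ range (m+1+1), cfv a (m+1) n k •
              (MvPolynomial.C (B^k) * Φ (w (m+1-k)) * Ψ (w (n-k)))
            = cfv a m n k • (MvPolynomial.C (B^k) * Φ (w (m+1-k)) * Ψ (w (n-k)))
            + (if k = 0 then 0 else (q^(2*m) * (-(q^a)) * (1-q^(2*n)) * cfv a m (n-1) (k-1)) •
                (MvPolynomial.C (B^k) * Φ (w (m+1-k)) * Ψ (w (n-k)))) := by
          intro k _
          rw [hsplit k]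
          match k with
          | 0 => simp
          | k+1 => rw [if_neg (by omega), if_neg (by omega), add_smul]
        rw [Finset.sum_congr rfl this, Finset.sum_add_distrib]
        congr 1
        · -- drop the vanishing top term
          rw [Finset.sum_range_succ]
          have : cfv a m n (m+1) = 0 := by
            simp [hcf, alpha_vanish m (m+1) (by omega)]
          rw [this, zero_smul, add_zero]
        · -- reindex the second sum
          rw [Finset.sum_range_succ']
          rw [if_pos rfl, add_zero]
          apply Finset.sum_congr rfl
          intro k _
          rw [if_neg (by omega), show k+1-1 = k from rfl,
            show m+1-(k+1) = m-k from by omega, show n-(k+1) = n-1-k from by omega]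
      rw [h4]
      have h5 : (∑ k ∈ range (m+1), (q^(2*m) * (-(q^a)) * (1-q^(2*n)) * cfv a m (n-1) k) •
              (MvPolynomial.C (B^(k+1)) * Φ (w (m-k)) * Ψ (w (n-1-k))))
          = -(if n = 0 then 0 else
            MvPolynomial.C ((q ^ (2 * m) * (1 - q ^ (2 * n)) * q ^ a) • B) * W m (n - 1)) := by
        match n with
        | 0 =>
          rw [if_pos rfl, neg_zero]
          apply Finset.sum_eq_zero
          intro k _
          have : (q^(2*m) * (-(q^a)) * (1-q^(2*(0:ℕ))) * cfv a m (0-1) k) = 0 := by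
            norm_num
          rw [this, zero_smul]
        | n'+1 =>
          rw [if_neg (by omega), show n'+1-1 = n' from rfl, ih m (by omega) n']
          rw [Finset.mul_sum, ← Finset.sum_neg_distrib]
          apply Finset.sum_congr rfl
          intro k _
          simp only [hsm, hsmM, map_mul, map_pow, map_neg]
          ring
      rw [h5]
      ring
end Main

lemma cfv_eq_zero (a : ℤ) (m n k : ℕ) (h : n < k) : cfv a m n k = 0 := by
  unfold cfv
  have : ∏ t ∈ range k, (1 - q^(2*(n-t))) = 0 := by
    apply Finset.prod_eq_zero (Finset.mem_range.mpr h)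
    rw [Nat.sub_self]
    norm_num
  rw [this, mul_zero]

lemma coeffID' (aa : ℤ) (N n k : ℕ) (hk : k ≤ n) (hkN : n + k ≤ N)
    (ha : aa = 1 - (N : ℤ)) :
    ((-1:RatFunc ℚ)^n * qbinom N n) * cfv aa (N-n) n k
    = ((-1:RatFunc ℚ)^(n-k) * qbinom N (n-k)) *
      ((-1:RatFunc ℚ)^k * q^k * ((q-q⁻¹)^k * q^(-((k*(k+1)/2 : ℕ):ℤ))) *
        (qfact (N-(n-k)) / (qfact (N-(n-k)-2*k) * qfact k))) := by
  obtain ⟨j, hj⟩ : ∃ j, n = j + k := ⟨n - k, by omega⟩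
  subst hj
  obtain ⟨e, he⟩ : ∃ e, N = j + 2*k + e := ⟨N - j - 2*k, by omega⟩
  subst he
  rw [show j + k - k = j from by omega,
    show j + 2*k + e - (j + k) = k + e from by omega,
    show j + 2*k + e - j = 2*k + e from by omega,
    show 2*k + e - 2*k = e from by omega]
  exact coeffID aa j k e ha

/-- for `r = q^a` with `a ≤ 0`, the quantum Serre combination of the
bivariate polynomials `w_{m,n}` equals the product form
`Σ (-1)^n binom_q(1-a,n) v_{1-a-n}(x) w_n(y)` (reversed product form). -/
theorem stmt5 {M : Type*} [CommRing M] [Algebra (RatFunc ℚ) M] (B : M)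
    (a : ℤ) (ha : a ≤ 0) (N : ℕ) (hN : (N : ℤ) = 1 - a)
    (w : ℕ → Polynomial M)
    (hw0 : w 0 = 1) (hw1 : w 1 = X)
    (hwrec : ∀ m : ℕ, 1 ≤ m →
      X * w m = w (m + 1) + C ((1 - q ^ (2 * m)) • B) * w (m - 1))
    (v : ℕ → Polynomial M)
    (hv : ∀ m : ℕ, v m = ∑ k ∈ range (m / 2 + 1),
      C ((((-1 : RatFunc ℚ) ^ k * q ^ k * ((q - q⁻¹) ^ k * q ^ (-((k * (k + 1) / 2 : ℕ) : ℤ))) *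
        (qfact m / (qfact (m - 2 * k) * qfact k)))) • B ^ k) * w (m - 2 * k))
    (W : ℕ → ℕ → MvPolynomial (Fin 2) M)
    (hW0 : ∀ n, W 0 n = Polynomial.aeval (MvPolynomial.X 1 : MvPolynomial (Fin 2) M) (w n))
    (hWrec : ∀ m n : ℕ,
      MvPolynomial.X 0 * W m n =
        W (m + 1) n
        + (if m = 0 then 0 else MvPolynomial.C ((1 - q ^ (2 * m)) • B) * W (m - 1) n)
        + (if n = 0 then 0 else
            MvPolynomial.C ((q ^ (2 * m) * (1 - q ^ (2 * n)) * q ^ a) • B) * W m (n - 1))) :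
    ∑ n ∈ range (N + 1), ((-1 : RatFunc ℚ) ^ n * qbinom N n) • W (N - n) n
      = ∑ n ∈ range (N + 1), ((-1 : RatFunc ℚ) ^ n * qbinom N n) •
          (Polynomial.aeval (MvPolynomial.X 0 : MvPolynomial (Fin 2) M) (v (N - n)) *
           Polynomial.aeval (MvPolynomial.X 1 : MvPolynomial (Fin 2) M) (w n)) := by
  have ha' : a = 1 - (N : ℤ) := by omega
  have hWc := Wclosed (B := B) a N w hw0 hw1 hwrec W hW0 hWrec
  have hsm : ∀ (r : RatFunc ℚ) (x : MvPolynomial (Fin 2) M),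
      r • x = MvPolynomial.C (algebraMap (RatFunc ℚ) M r) * x := by
    intro r x
    rw [Algebra.smul_def]
    rfl
  have hsmM : ∀ (r : RatFunc ℚ) (b : M), r • b = algebraMap (RatFunc ℚ) M r * b :=
    fun r b => Algebra.smul_def r b
  have haC : ∀ b : M, Polynomial.aeval (MvPolynomial.X 0 : MvPolynomial (Fin 2) M) (C b)
      = MvPolynomial.C b := by
    intro b
    simp
  -- the two term families
  set F : ℕ → ℕ → MvPolynomial (Fin 2) M := fun n k =>
    (((-1 : RatFunc ℚ) ^ n * qbinom N n) * cfv a (N - n) n k) •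
      (MvPolynomial.C (B ^ k)
        * Polynomial.aeval (MvPolynomial.X 0 : MvPolynomial (Fin 2) M) (w (N - n - k))
        * Polynomial.aeval (MvPolynomial.X 1 : MvPolynomial (Fin 2) M) (w (n - k))) with hF
  set G : ℕ → ℕ → MvPolynomial (Fin 2) M := fun n k =>
    (((-1 : RatFunc ℚ) ^ n * qbinom N n) *
      ((-1 : RatFunc ℚ) ^ k * q ^ k * ((q - q⁻¹) ^ k * q ^ (-((k * (k + 1) / 2 : ℕ) : ℤ))) *
        (qfact (N - n) / (qfact (N - n - 2 * k) * qfact k)))) •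
      (MvPolynomial.C (B ^ k)
        * Polynomial.aeval (MvPolynomial.X 0 : MvPolynomial (Fin 2) M) (w (N - n - 2 * k))
        * Polynomial.aeval (MvPolynomial.X 1 : MvPolynomial (Fin 2) M) (w n)) with hG
  have hL : ∀ n ∈ range (N + 1), ((-1 : RatFunc ℚ) ^ n * qbinom N n) • W (N - n) n
      = ∑ k ∈ range (N - n + 1), F n k := by
    intro n _
    rw [hWc (N - n) n, Finset.smul_sum]
    apply Finset.sum_congr rfl
    intro k _
    rw [hF, smul_smul]
  have hR : ∀ n ∈ range (N + 1), ((-1 : RatFunc ℚ) ^ n * qbinom N n) •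
        (Polynomial.aeval (MvPolynomial.X 0 : MvPolynomial (Fin 2) M) (v (N - n)) *
         Polynomial.aeval (MvPolynomial.X 1 : MvPolynomial (Fin 2) M) (w n))
      = ∑ k ∈ range ((N - n) / 2 + 1), G n k := by
    intro n _
    rw [hv (N - n), map_sum, Finset.sum_mul, Finset.smul_sum]
    apply Finset.sum_congr rfl
    intro k _
    rw [hG, map_mul, haC]
    simp only [hsm, hsmM, map_mul, map_pow, map_neg]
    ring
  rw [Finset.sum_congr rfl hL, Finset.sum_congr rfl hR]
  rw [Finset.sum_sigma', Finset.sum_sigma']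
  rw [← Finset.sum_filter_of_ne (p := fun p : Σ _ : ℕ, ℕ => p.2 ≤ p.1)
    (by
      intro p hp hne
      by_contra hc
      apply hne
      rw [hF]
      simp only []
      rw [cfv_eq_zero a _ _ _ (by omega), mul_zero, zero_smul])]
  apply Finset.sum_nbij' (i := fun p : Σ _ : ℕ, ℕ => (⟨p.1 - p.2, p.2⟩ : Σ _ : ℕ, ℕ))
    (j := fun p : Σ _ : ℕ, ℕ => (⟨p.1 + p.2, p.2⟩ : Σ _ : ℕ, ℕ))
  · -- hi
    intro p hp
    simp only [Finset.mem_filter, Finset.mem_sigma, Finset.mem_range] at hp ⊢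
    have h2 : p.2 * 2 ≤ N - (p.1 - p.2) := by omega
    constructor
    · omega
    · have := Nat.le_div_iff_mul_le (k := 2) (by norm_num) |>.mpr h2
      omega
  · -- hj
    intro p hp
    simp only [Finset.mem_filter, Finset.mem_sigma, Finset.mem_range] at hp ⊢
    have h2 := Nat.lt_succ_iff.mp hp.2
    have := (Nat.le_div_iff_mul_le (k := 2) (by norm_num)).mp h2
    omega
  · -- left_inv
    intro p hp
    simp only [Finset.mem_filter, Finset.mem_sigma, Finset.mem_range] at hp
    have : p.1 - p.2 + p.2 = p.1 := by omega
    exact Sigma.ext (by simpa using this) (by simp)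
  · -- right_inv
    intro p _
    exact Sigma.ext (by simp) (by simp)
  · -- terms
    intro p hp
    simp only [Finset.mem_filter, Finset.mem_sigma, Finset.mem_range] at hp
    obtain ⟨⟨hn, hk⟩, hkn⟩ := hp
    simp only [hF, hG]
    have hco := coeffID' a N p.1 p.2 hkn (by omega) ha'
    have hidx : N - p.1 - p.2 = N - (p.1 - p.2) - 2 * p.2 := by omega
    rw [hco, hidx]
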